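/- Let k₂ ≥ k₁ ≥ r ≥ 1, suppose k₂ is an integer power of 2 and r divides k₁, and let H ∈ ℝ^{k₂×k₂} be a Hadamard matrix (±1 entries, orthogonal rows). Define X ∈ ℝ^{k₁×k₂} whose i-th row equals the (((i−1) mod r)+1)-th row of H. Then the normalized matrix X̄ = X/‖X‖_F satisfies ‖X̄‖₁² = k₁k₂, ‖X̄‖_★² = r, ‖X̄‖_{1,2}² = k₂, and ‖X̄ᵀ‖_{1,2}² = k₁. -/

import Mathlib

open Matrix

lemma sum_range_mod_indicator (r a : ℕ) (ha : a < r) (m : ℕ) :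
    (∑ i ∈ Finset.range (r * m), if i % r = a then (1:ℝ) else 0) = m := by
  induction m with
  | zero => simp
  | succ n ih =>
    rw [Nat.mul_succ, Finset.sum_range_add, ih]
    have hc : ∀ i ∈ Finset.range r,
        (if (r * n + i) % r = a then (1:ℝ) else 0) = if i = a then (1:ℝ) else 0 := by
      intro i hi
      rw [Nat.add_comm, Nat.add_mul_mod_self_left, Nat.mod_eq_of_lt (Finset.mem_range.mp hi)]
    rw [Finset.sum_congr rfl hc, Finset.sum_ite_eq' (Finset.range r) a (fun _ => (1:ℝ)),
      if_pos (Finset.mem_range.mpr ha)]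
    push_cast
    ring

lemma trace_eq_sum_eig {n : ℕ} (A : Matrix (Fin n) (Fin n) ℝ) (hA : A.IsHermitian) :
    A.trace = ∑ i, hA.eigenvalues i := by
  nth_rewrite 1 [hA.spectral_theorem]
  rw [Unitary.conjStarAlgAut_apply]
  rw [Matrix.trace_mul_cycle]
  rw [show (star (hA.eigenvectorUnitary : Matrix (Fin n) (Fin n) ℝ)) *
      (hA.eigenvectorUnitary : Matrix (Fin n) (Fin n) ℝ) = 1 from Unitary.coe_star_mul_self _,
    Matrix.one_mul, Matrix.trace_diagonal]
  simp

lemma eig_zero_or {n : ℕ} (A : Matrix (Fin n) (Fin n) ℝ) (hA : A.IsHermitian) (c : ℝ)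
    (h : A * A = c • A) (j : Fin n) :
    hA.eigenvalues j = 0 ∨ hA.eigenvalues j = c := by
  set lam := hA.eigenvalues j with hlam
  set v : Fin n → ℝ := ⇑(hA.eigenvectorBasis j) with hv
  have hvne : v ≠ 0 := by
    intro h0
    exact hA.eigenvectorBasis.orthonormal.ne_zero j (by ext x; exact congrFun h0 x)
  have e : A *ᵥ v = lam • v := hA.mulVec_eigenvectorBasis j
  have e2 : (lam * lam) • v = (c * lam) • v := by
    have h1 : A *ᵥ (A *ᵥ v) = (lam * lam) • v := by rw [e, mulVec_smul, e, smul_smul]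
    have h2 : A *ᵥ (A *ᵥ v) = (c * lam) • v := by
      rw [mulVec_mulVec, h, smul_mulVec, e, smul_smul]
    rw [← h1, h2]
  have h3 : lam * lam = c * lam := smul_left_injective ℝ hvne e2
  rcases mul_eq_zero.mp (show (lam - c) * lam = 0 by linear_combination h3) with h' | h'
  · right; linarith
  · left; exact h'

/-- Hadamard construction of a maximally spread S&L matrix. With
`1 ≤ r ≤ k₁ ≤ k₂`, `r ∣ k₁`, `k₂` a power of two, `H` a `k₂ × k₂` Hadamard matrix and
`X` the `k₁ × k₂` matrix whose `i`-th row is the `((i mod r)+1)`-th row of `H`, the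
normalization `X̄ = X/‖X‖_F` satisfies `‖X̄‖₁² = k₁k₂`, `‖X̄‖_★² = r`, `‖X̄‖_{1,2}² = k₂`
and `‖X̄ᵀ‖_{1,2}² = k₁` (nuclear norm = sum of singular values, i.e. of the square roots
of the eigenvalues of `XᴴX`). -/
theorem hadamard_sl_construction {r k₁ k₂ : ℕ}
    (hr : 1 ≤ r) (h1 : r ≤ k₁) (h2 : k₁ ≤ k₂)
    (hdvd : r ∣ k₁) (hpow : ∃ t : ℕ, k₂ = 2 ^ t)
    (H : Matrix (Fin k₂) (Fin k₂) ℝ)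
    (hHpm : ∀ i j, H i j = 1 ∨ H i j = -1)
    (hHorth : H * Hᵀ = (k₂ : ℝ) • 1)
    (X : Matrix (Fin k₁) (Fin k₂) ℝ)
    (hX : ∀ (i : Fin k₁) (j : Fin k₂),
      X i j = H ⟨i.val % r, lt_of_lt_of_le (Nat.mod_lt _ hr) (h1.trans h2)⟩ j)
    (frob : ℝ) (hfrob : frob = Real.sqrt (∑ i, ∑ j, X i j ^ 2))
    (nuc : ℝ)
    (hnuc : nuc = ∑ j, Real.sqrt ((Matrix.isHermitian_conjTranspose_mul_self X).eigenvalues j)) :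
    ((∑ i, ∑ j, |X i j|) / frob) ^ 2 = (k₁ : ℝ) * k₂ ∧
    (nuc / frob) ^ 2 = (r : ℝ) ∧
    ((∑ j, Real.sqrt (∑ i, X i j ^ 2)) / frob) ^ 2 = (k₂ : ℝ) ∧
    ((∑ i, Real.sqrt (∑ j, X i j ^ 2)) / frob) ^ 2 = (k₁ : ℝ) := by
  obtain ⟨m, hm⟩ := hdvd
  have hk₁ : 0 < k₁ := hr.trans h1
  have hk₂ : 0 < k₂ := hk₁.trans_le h2
  have hm1 : 0 < m := Nat.pos_of_ne_zero (fun h0 => by rw [h0, Nat.mul_zero] at hm; omega)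
  have hk₁R : (0:ℝ) < k₁ := by exact_mod_cast hk₁
  have hk₂R : (0:ℝ) < k₂ := by exact_mod_cast hk₂
  have hmR : (0:ℝ) < m := by exact_mod_cast hm1
  have hrR : (0:ℝ) < r := by exact_mod_cast hr
  -- entries are ±1
  have habs : ∀ i j, |X i j| = 1 := by
    intro i j
    rcases hHpm ⟨i.val % r, lt_of_lt_of_le (Nat.mod_lt _ hr) (h1.trans h2)⟩ j with h | h <;>
      rw [hX, h] <;> norm_num
  have hsq : ∀ i j, X i j ^ 2 = 1 := by
    intro i j
    rw [← sq_abs, habs]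
    norm_num
  -- Frobenius norm
  have hsum : (∑ i, ∑ j, X i j ^ 2) = (k₁:ℝ) * k₂ := by
    simp [hsq, Finset.sum_const, Finset.card_univ]
  have hF : frob = Real.sqrt ((k₁:ℝ) * k₂) := by rw [hfrob, hsum]
  have hF2 : frob ^ 2 = (k₁:ℝ) * k₂ := by
    rw [hF, Real.sq_sqrt (by positivity)]
  have hFpos : 0 < frob := by
    rw [hF]; exact Real.sqrt_pos.mpr (by positivity)
  -- claim 1
  have claim1 : ((∑ i, ∑ j, |X i j|) / frob) ^ 2 = (k₁ : ℝ) * k₂ := by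
    have : (∑ i : Fin k₁, ∑ j : Fin k₂, |X i j|) = (k₁:ℝ) * k₂ := by
      simp [habs, Finset.sum_const, Finset.card_univ]
    rw [this, div_pow, hF2, sq, mul_div_assoc, div_self (by positivity), mul_one]
  -- claim 3
  have claim3 : ((∑ j, Real.sqrt (∑ i, X i j ^ 2)) / frob) ^ 2 = (k₂ : ℝ) := by
    have hin : ∀ j : Fin k₂, (∑ i, X i j ^ 2) = (k₁:ℝ) := by
      intro j; simp [hsq, Finset.sum_const, Finset.card_univ]
    have : (∑ j : Fin k₂, Real.sqrt (∑ i, X i j ^ 2)) = (k₂:ℝ) * Real.sqrt k₁ := by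
      simp [hin, Finset.sum_const, Finset.card_univ, mul_comm]
    rw [this, div_pow, hF2, mul_pow, Real.sq_sqrt hk₁R.le]
    field_simp
  -- claim 4
  have claim4 : ((∑ i, Real.sqrt (∑ j, X i j ^ 2)) / frob) ^ 2 = (k₁ : ℝ) := by
    have hin : ∀ i : Fin k₁, (∑ j, X i j ^ 2) = (k₂:ℝ) := by
      intro i; simp [hsq, Finset.sum_const, Finset.card_univ]
    have : (∑ i : Fin k₁, Real.sqrt (∑ j, X i j ^ 2)) = (k₁:ℝ) * Real.sqrt k₂ := by
      simp [hin, Finset.sum_const, Finset.card_univ, mul_comm]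
    rw [this, div_pow, hF2, mul_pow, Real.sq_sqrt hk₂R.le]
    field_simp
  -- nuclear norm
  set A : Matrix (Fin k₂) (Fin k₂) ℝ := Xᴴ * X with hA_def
  set hA := Matrix.isHermitian_conjTranspose_mul_self X
  set c : ℝ := (m:ℝ) * k₂ with hc_def
  have hcpos : 0 < c := by positivity
  -- orthogonality of rows of H
  have horth : ∀ a b : Fin k₂, (∑ j, H a j * H b j) = if a = b then (k₂:ℝ) else 0 := by
    intro a b
    have := congrFun (congrFun hHorth a) b
    simpa [Matrix.mul_apply, Matrix.one_apply, mul_ite] using this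
  have hXX : ∀ i i' : Fin k₁,
      (∑ j, X i j * X i' j) = if (i:ℕ) % r = (i':ℕ) % r then (k₂:ℝ) else 0 := by
    intro i i'
    simp_rw [hX]
    rw [horth]
    simp [Fin.ext_iff]
  have hrow : ∀ i i' : Fin k₁, (i:ℕ) % r = (i':ℕ) % r → ∀ j, X i j = X i' j := by
    intro i i' h j
    rw [hX, hX]
    congr 1
    exact Fin.ext h
  have hXXt : ∀ i i' : Fin k₁,
      (X * Xᴴ) i i' = if (i:ℕ) % r = (i':ℕ) % r then (k₂:ℝ) else 0 := by
    intro i i'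
    rw [Matrix.mul_apply]
    simp only [Matrix.conjTranspose_apply, star_trivial]
    exact hXX i i'
  have hcount : ∀ a : ℕ, a < r →
      (∑ i : Fin k₁, if (i:ℕ) % r = a then (1:ℝ) else 0) = m := by
    intro a ha
    rw [Fin.sum_univ_eq_sum_range (fun i => if i % r = a then (1:ℝ) else 0) k₁, hm]
    exact sum_range_mod_indicator r a ha m
  have hkey : (X * Xᴴ) * X = c • X := by
    ext i j
    rw [Matrix.mul_apply, Matrix.smul_apply, smul_eq_mul]
    calc ∑ i' : Fin k₁, (X * Xᴴ) i i' * X i' j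
        = ∑ i' : Fin k₁, (if (i':ℕ) % r = (i:ℕ) % r then (1:ℝ) else 0) * ((k₂:ℝ) * X i j) := by
          apply Finset.sum_congr rfl
          intro i' _
          rw [hXXt]
          by_cases h : (i:ℕ) % r = (i':ℕ) % r
          · rw [if_pos h, if_pos h.symm, one_mul, hrow i i' h j]
          · rw [if_neg h, if_neg (fun hh => h hh.symm), zero_mul, zero_mul]
      _ = (∑ i' : Fin k₁, if (i':ℕ) % r = (i:ℕ) % r then (1:ℝ) else 0) * ((k₂:ℝ) * X i j) := by
          rw [Finset.sum_mul]
      _ = (m:ℝ) * ((k₂:ℝ) * X i j) := by rw [hcount ((i:ℕ) % r) (Nat.mod_lt _ hr)]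
      _ = c * X i j := by rw [hc_def]; ring
  have hAA : A * A = c • A := by
    rw [hA_def, Matrix.mul_assoc Xᴴ X (Xᴴ * X), ← Matrix.mul_assoc X Xᴴ X, hkey,
      Matrix.mul_smul]
  -- each eigenvalue is 0 or c
  have heig : ∀ j : Fin k₂, hA.eigenvalues j = 0 ∨ hA.eigenvalues j = c :=
    fun j => eig_zero_or A hA c hAA j
  -- sqrt of eigenvalues
  have hsqrtc : Real.sqrt c ^ 2 = c := Real.sq_sqrt hcpos.le
  have hsqrtcpos : 0 < Real.sqrt c := Real.sqrt_pos.mpr hcpos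
  have hsqrt : ∀ j : Fin k₂, Real.sqrt (hA.eigenvalues j) = hA.eigenvalues j / Real.sqrt c := by
    intro j
    rcases heig j with h | h
    · rw [h]; simp
    · rw [h, eq_div_iff hsqrtcpos.ne', Real.mul_self_sqrt hcpos.le]
  -- trace = sum of eigenvalues
  have htrace : A.trace = (k₁:ℝ) * k₂ := by
    have hdiag : ∀ j : Fin k₂, A j j = (k₁:ℝ) := by
      intro j
      rw [hA_def, Matrix.mul_apply]
      simp only [Matrix.conjTranspose_apply, star_trivial]
      have hms : ∀ i : Fin k₁, X i j * X i j = 1 := by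
        intro i
        nlinarith [hsq i j]
      simp [hms, Finset.sum_const, Finset.card_univ]
    simp [Matrix.trace, Matrix.diag, hdiag, Finset.sum_const, Finset.card_univ, mul_comm]
  have hsum_eig : (∑ j, hA.eigenvalues j) = (k₁:ℝ) * k₂ := by
    rw [← trace_eq_sum_eig A hA, htrace]
  have hnucval : nuc = ((k₁:ℝ) * k₂) / Real.sqrt c := by
    rw [hnuc]
    calc (∑ j, Real.sqrt (hA.eigenvalues j))
        = ∑ j, hA.eigenvalues j / Real.sqrt c := Finset.sum_congr rfl fun j _ => hsqrt j
      _ = (∑ j, hA.eigenvalues j) / Real.sqrt c := by rw [Finset.sum_div]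
      _ = ((k₁:ℝ) * k₂) / Real.sqrt c := by rw [hsum_eig]
  -- claim 2
  have hk₁mr : (k₁:ℝ) = (r:ℝ) * m := by exact_mod_cast hm
  have claim2 : (nuc / frob) ^ 2 = (r : ℝ) := by
    rw [hnucval, div_div, div_pow,
      show (Real.sqrt c * frob) ^ 2 = c * ((k₁:ℝ) * k₂) by rw [mul_pow, hsqrtc, hF2],
      hk₁mr, hc_def]
    field_simp
  exact ⟨claim1, claim2, claim3, claim4⟩
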